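/- If C ⊆ 2^[n] and D ⊆ 2^[m] are codes with convex open realizations in Euclidean space, then the product code C × D = {c ∪ (d + n) : c ∈ C, d ∈ D} ⊆ 2^[n+m] (where d + n denotes shifting each element of d by n) has a convex open realization, with minimal embedding dimension at most mindim(C) + mindim(D). -/

import Mathlib

def trunk {n : ℕ} (C : Set (Finset (Fin n))) (σ : Finset (Fin n)) : Set (Finset (Fin n)) :=
  {c | c ∈ C ∧ σ ⊆ c}

def IsConvexRealization {n d : ℕ} (C : Set (Finset (Fin n)))
    (X : Set (EuclideanSpace ℝ (Fin d))) (U : Fin n → Set (EuclideanSpace ℝ (Fin d))) : Prop :=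
  IsOpen X ∧ Convex ℝ X ∧
  (∀ i, IsOpen (U i) ∧ Convex ℝ (U i) ∧ U i ⊆ X) ∧
  ∀ σ : Finset (Fin n), σ ∈ C ↔ ∃ x ∈ X, ∀ i : Fin n, x ∈ U i ↔ i ∈ σ

def IsConvexCodeIn (d : ℕ) {n : ℕ} (C : Set (Finset (Fin n))) : Prop :=
  ∃ (X : Set (EuclideanSpace ℝ (Fin d))) (U : Fin n → Set (EuclideanSpace ℝ (Fin d))),
    IsConvexRealization C X U

def prodCode {n m : ℕ} (C : Set (Finset (Fin n))) (D : Set (Finset (Fin m))) :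
    Set (Finset (Fin (n + m))) :=
  {v | ∃ c ∈ C, ∃ d ∈ D, v = c.image (Fin.castAdd m) ∪ d.image (Fin.natAdd n)}

noncomputable def proj1 (d₁ d₂ : ℕ) :
    EuclideanSpace ℝ (Fin (d₁ + d₂)) →ₗ[ℝ] EuclideanSpace ℝ (Fin d₁) where
  toFun x := WithLp.toLp 2 (fun i => x (Fin.castAdd d₂ i))
  map_add' _ _ := rfl
  map_smul' _ _ := rfl

noncomputable def proj2 (d₁ d₂ : ℕ) :
    EuclideanSpace ℝ (Fin (d₁ + d₂)) →ₗ[ℝ] EuclideanSpace ℝ (Fin d₂) where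
  toFun x := WithLp.toLp 2 (fun i => x (Fin.natAdd d₁ i))
  map_add' _ _ := rfl
  map_smul' _ _ := rfl

noncomputable def glue {d₁ d₂ : ℕ} (x₁ : EuclideanSpace ℝ (Fin d₁))
    (x₂ : EuclideanSpace ℝ (Fin d₂)) : EuclideanSpace ℝ (Fin (d₁ + d₂)) :=
  WithLp.toLp 2 (fun k => Fin.addCases (motive := fun _ => ℝ) x₁.ofLp x₂.ofLp k)

lemma proj1_glue {d₁ d₂ : ℕ} (x₁ : EuclideanSpace ℝ (Fin d₁)) (x₂ : EuclideanSpace ℝ (Fin d₂)) :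
    proj1 d₁ d₂ (glue x₁ x₂) = x₁ := by
  ext i
  show Fin.addCases (motive := fun _ => ℝ) x₁.ofLp x₂.ofLp (Fin.castAdd d₂ i) = x₁.ofLp i
  simp only [Fin.addCases_left]

lemma proj2_glue {d₁ d₂ : ℕ} (x₁ : EuclideanSpace ℝ (Fin d₁)) (x₂ : EuclideanSpace ℝ (Fin d₂)) :
    proj2 d₁ d₂ (glue x₁ x₂) = x₂ := by
  ext i
  show Fin.addCases (motive := fun _ => ℝ) x₁.ofLp x₂.ofLp (Fin.natAdd d₁ i) = x₂.ofLp i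
  simp only [Fin.addCases_right]

theorem product_convex {n m d₁ d₂ : ℕ} (C : Set (Finset (Fin n))) (D : Set (Finset (Fin m)))
    (hC : IsConvexCodeIn d₁ C) (hD : IsConvexCodeIn d₂ D) :
    IsConvexCodeIn (d₁ + d₂) (prodCode C D) := by
  obtain ⟨X₁, U₁, hX₁o, hX₁c, hU₁, hcode₁⟩ := hC
  obtain ⟨X₂, U₂, hX₂o, hX₂c, hU₂, hcode₂⟩ := hD
  have hπ₁cont : Continuous (proj1 d₁ d₂) := (proj1 d₁ d₂).continuous_of_finiteDimensional
  have hπ₂cont : Continuous (proj2 d₁ d₂) := (proj2 d₁ d₂).continuous_of_finiteDimensional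
  refine ⟨proj1 d₁ d₂ ⁻¹' X₁ ∩ proj2 d₁ d₂ ⁻¹' X₂,
    Fin.addCases (fun i => proj1 d₁ d₂ ⁻¹' (U₁ i) ∩ proj2 d₁ d₂ ⁻¹' X₂)
      (fun j => proj1 d₁ d₂ ⁻¹' X₁ ∩ proj2 d₁ d₂ ⁻¹' (U₂ j)), ?_, ?_, ?_, ?_⟩
  · exact (hX₁o.preimage hπ₁cont).inter (hX₂o.preimage hπ₂cont)
  · exact (hX₁c.linear_preimage (proj1 d₁ d₂)).inter (hX₂c.linear_preimage (proj2 d₁ d₂))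
  · intro k
    refine Fin.addCases (fun i => ?_) (fun j => ?_) k
    · simp only [Fin.addCases_left]
      exact ⟨((hU₁ i).1.preimage hπ₁cont).inter (hX₂o.preimage hπ₂cont),
        (((hU₁ i).2.1).linear_preimage (proj1 d₁ d₂)).inter (hX₂c.linear_preimage (proj2 d₁ d₂)),
        Set.inter_subset_inter_left _ (Set.preimage_mono (hU₁ i).2.2)⟩
    · simp only [Fin.addCases_right]
      exact ⟨(hX₁o.preimage hπ₁cont).inter ((hU₂ j).1.preimage hπ₂cont),
        (hX₁c.linear_preimage (proj1 d₁ d₂)).inter (((hU₂ j).2.1).linear_preimage (proj2 d₁ d₂)),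
        Set.inter_subset_inter_right _ (Set.preimage_mono (hU₂ j).2.2)⟩
  · intro σ
    constructor
    · rintro ⟨c, hc, dd, hdd, rfl⟩
      obtain ⟨x₁, hx₁X, hx₁⟩ := (hcode₁ c).mp hc
      obtain ⟨x₂, hx₂X, hx₂⟩ := (hcode₂ dd).mp hdd
      refine ⟨glue x₁ x₂, ⟨by simp only [Set.mem_preimage, proj1_glue]; exact hx₁X,
        by simp only [Set.mem_preimage, proj2_glue]; exact hx₂X⟩, ?_⟩
      intro k
      refine Fin.addCases (fun i => ?_) (fun j => ?_) k
      · simp only [Fin.addCases_left, Set.mem_inter_iff, Set.mem_preimage,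
          proj1_glue, proj2_glue]
        constructor
        · rintro ⟨h, -⟩
          exact Finset.mem_union_left _ (Finset.mem_image_of_mem _ ((hx₁ i).mp h))
        · intro h
          refine ⟨(hx₁ i).mpr ?_, hx₂X⟩
          rcases Finset.mem_union.mp h with h | h
          · obtain ⟨i', hi', hii⟩ := Finset.mem_image.mp h
            rwa [(show i' = i by simpa [Fin.ext_iff] using hii)] at hi'
          · obtain ⟨j', hj', hjj⟩ := Finset.mem_image.mp h
            exact absurd hjj (by simp [Fin.ext_iff, Fin.castAdd, Fin.natAdd]; omega)
      · simp only [Fin.addCases_right, Set.mem_inter_iff, Set.mem_preimage,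
          proj1_glue, proj2_glue]
        constructor
        · rintro ⟨-, h⟩
          exact Finset.mem_union_right _ (Finset.mem_image_of_mem _ ((hx₂ j).mp h))
        · intro h
          refine ⟨hx₁X, (hx₂ j).mpr ?_⟩
          rcases Finset.mem_union.mp h with h | h
          · obtain ⟨i', hi', hii⟩ := Finset.mem_image.mp h
            exact absurd hii (by simp [Fin.ext_iff, Fin.castAdd, Fin.natAdd]; omega)
          · obtain ⟨j', hj', hjj⟩ := Finset.mem_image.mp h
            rwa [(show j' = j by simpa [Fin.ext_iff] using hjj)] at hj'
    · rintro ⟨x, ⟨hxX₁, hxX₂⟩, hx⟩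
      refine ⟨Finset.univ.filter (fun i => Fin.castAdd m i ∈ σ), ?_,
        Finset.univ.filter (fun j => Fin.natAdd n j ∈ σ), ?_, ?_⟩
      · refine (hcode₁ _).mpr ⟨proj1 d₁ d₂ x, hxX₁, fun i => ?_⟩
        have := hx (Fin.castAdd m i)
        simp only [Fin.addCases_left, Set.mem_inter_iff, Set.mem_preimage] at this
        simp only [Finset.mem_filter, Finset.mem_univ, true_and]
        exact ⟨fun h => this.mp ⟨h, hxX₂⟩, fun h => (this.mpr h).1⟩
      · refine (hcode₂ _).mpr ⟨proj2 d₁ d₂ x, hxX₂, fun j => ?_⟩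
        have := hx (Fin.natAdd n j)
        simp only [Fin.addCases_right, Set.mem_inter_iff, Set.mem_preimage] at this
        simp only [Finset.mem_filter, Finset.mem_univ, true_and]
        exact ⟨fun h => this.mp ⟨hxX₁, h⟩, fun h => (this.mpr h).2⟩
      · ext k
        refine Fin.addCases (fun i => ?_) (fun j => ?_) k
        · simp only [Finset.mem_union, Finset.mem_image, Finset.mem_filter, Finset.mem_univ,
            true_and]
          constructor
          · intro h; exact Or.inl ⟨i, h, rfl⟩
          · rintro (⟨i', hi', hii⟩ | ⟨j', hj', hjj⟩)
            · rwa [(show i' = i by simpa [Fin.ext_iff] using hii)] at hi'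
            · exact absurd hjj (by simp [Fin.ext_iff, Fin.castAdd, Fin.natAdd]; omega)
        · simp only [Finset.mem_union, Finset.mem_image, Finset.mem_filter, Finset.mem_univ,
            true_and]
          constructor
          · intro h; exact Or.inr ⟨j, h, rfl⟩
          · rintro (⟨i', hi', hii⟩ | ⟨j', hj', hjj⟩)
            · exact absurd hii (by simp [Fin.ext_iff, Fin.castAdd, Fin.natAdd]; omega)
            · rwa [(show j' = j by simpa [Fin.ext_iff] using hjj)] at hj'
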